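/- Let k ≥ 3, and for j = 1, …, k let X_j be real n×p_j matrices with X_jᵀX_j invertible and hat matrices H_j = X_j(X_jᵀX_j)⁻¹X_jᵀ; let X = (X₁ X₂) with XᵀX invertible and H = X(XᵀX)⁻¹Xᵀ. Suppose the true models are y_j = X_j β_j + W_j θ_j + ε_j, where β_j ∈ ℝ^{p_j}, θ_j ∈ ℝ^{s_j}, W_j are random n×s_j matrices with E[W_j] = 0 that are mutually independent and independent of (ε₁, …, ε_k), and ε_j : Ω → ℝⁿ are square-integrable with E[ε_j] = 0 and E[ε_i ε_jᵀ] = σ_{ij} I with σ_{1j} ≥ 0 and σ_{2j} ≥ 0 for every j ≥ 3. Define the individual forecasts ŷ_j = H_j y_j and the combined forecast of the merged first two clusters ŷ_{1,2} = H(y₁ + y₂). Then E[‖Σ_{j=1}^k y_j − (ŷ_{1,2} + Σ_{j=3}^k ŷ_j)‖²] ≤ E[‖Σ_{j=1}^k y_j − Σ_{j=1}^k ŷ_j‖²]. -/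

import Mathlib

open Matrix MeasureTheory ProbabilityTheory
open scoped BigOperators

/-- The hat matrix `H_A = A (AᵀA)⁻¹ Aᵀ` of a design matrix `A`. -/
noncomputable def hatMat {n : ℕ} {q : Type*} [Fintype q] [DecidableEq q]
    (A : Matrix (Fin n) q ℝ) : Matrix (Fin n) (Fin n) ℝ :=
  A * (Aᵀ * A)⁻¹ * Aᵀ

namespace CombAux

variable {n : ℕ}

lemma hat_transpose {q : Type*} [Fintype q] [DecidableEq q] (A : Matrix (Fin n) q ℝ) :
    (hatMat A)ᵀ = hatMat A := by
  simp [hatMat, Matrix.transpose_mul, Matrix.transpose_nonsing_inv, Matrix.mul_assoc]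

lemma hat_mul_left {q : Type*} [Fintype q] [DecidableEq q] {A : Matrix (Fin n) q ℝ}
    (hA : IsUnit (Aᵀ * A)) : hatMat A * A = A := by
  have hd : IsUnit (Aᵀ * A).det := (Matrix.isUnit_iff_isUnit_det _).mp hA
  calc hatMat A * A = A * ((Aᵀ * A)⁻¹ * (Aᵀ * A)) := by
        simp [hatMat, Matrix.mul_assoc]
    _ = A := by rw [Matrix.nonsing_inv_mul _ hd, Matrix.mul_one]

lemma hat_idem {q : Type*} [Fintype q] [DecidableEq q] {A : Matrix (Fin n) q ℝ}
    (hA : IsUnit (Aᵀ * A)) : hatMat A * hatMat A = hatMat A := by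
  have h : hatMat A * hatMat A = hatMat A * A * ((Aᵀ * A)⁻¹ * Aᵀ) := by
    simp only [hatMat, Matrix.mul_assoc]
  rw [h, hat_mul_left hA, hatMat, Matrix.mul_assoc]

lemma trace_mul_nonneg_of_proj {P Q : Matrix (Fin n) (Fin n) ℝ}
    (hPs : Pᵀ = P) (hPi : P * P = P) (hQs : Qᵀ = Q) (hQi : Q * Q = Q) :
    0 ≤ Matrix.trace (P * Q) := by
  have key : Matrix.trace ((Q * P)ᵀ * (Q * P)) = Matrix.trace (P * Q) := by
    rw [Matrix.transpose_mul, hPs, hQs]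
    calc Matrix.trace (P * Q * (Q * P)) = Matrix.trace (P * (Q * P)) := by
          rw [Matrix.mul_assoc, ← Matrix.mul_assoc Q Q P, hQi]
      _ = Matrix.trace (Q * P * P) := by rw [Matrix.trace_mul_comm]
      _ = Matrix.trace (Q * P) := by rw [Matrix.mul_assoc, hPi]
      _ = Matrix.trace (P * Q) := Matrix.trace_mul_comm _ _
  rw [← key, Matrix.trace]
  refine Finset.sum_nonneg fun j _ => ?_
  simp only [Matrix.diag_apply, Matrix.mul_apply, Matrix.transpose_apply]
  exact Finset.sum_nonneg fun i _ => mul_self_nonneg _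

lemma sum_mul_eq_trace {A B : Matrix (Fin n) (Fin n) ℝ} (hBs : Bᵀ = B) :
    ∑ i, ∑ a, A i a * B i a = Matrix.trace (A * B) := by
  simp only [Matrix.trace, Matrix.diag_apply, Matrix.mul_apply]
  refine Finset.sum_congr rfl fun i _ => Finset.sum_congr rfl fun a _ => ?_
  rw [show B a i = B i a from congrFun (congrFun hBs i) a]

lemma integrable_mul_of_memL2 {Ω : Type*} [MeasurableSpace Ω] {P : Measure Ω}
    [IsFiniteMeasure P] {f g : Ω → ℝ}
    (hf : MemLp f 2 P) (hg : MemLp g 2 P) : Integrable (fun ω => f ω * g ω) P := by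
  have h : MemLp (f • g) 1 P := hg.smul hf
  exact h.integrable le_rfl

lemma sum_dotProduct' {ι : Type*} (s : Finset ι) (f : ι → Fin n → ℝ) (v : Fin n → ℝ) :
    (∑ j ∈ s, f j) ⬝ᵥ v = ∑ j ∈ s, f j ⬝ᵥ v := by
  simp only [dotProduct, Finset.sum_apply, Finset.sum_mul]
  rw [Finset.sum_comm]

end CombAux

open CombAux

/-- **Theorem 1.** With `k = K + 3 ≥ 3` clusters (indexed by `Fin (K+3)`, the merged
clusters being `0` and `1`), true models `y_j = X_jβ_j + W_jθ_j + ε_j`, mean-zero mutually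
independent `W_j` independent of the errors, `E[ε_i ε_jᵀ] = σ_{ij} I` with `σ_{0j} ≥ 0` and
`σ_{1j} ≥ 0` for all `j ≥ 2`: combining the first two clusters does not increase the
expected training error of the aggregate forecast. -/
theorem combining_two_clusters_decreases_expected_training_error {n : ℕ} (K : ℕ)
    {Ω : Type*} [MeasurableSpace Ω] (P : Measure Ω) [IsProbabilityMeasure P]
    (q s : Fin (K + 3) → ℕ)
    (X : (j : Fin (K + 3)) → Matrix (Fin n) (Fin (q j)) ℝ)
    (hXj : ∀ j, IsUnit ((X j)ᵀ * X j))
    (hX : IsUnit ((fromCols (X 0) (X 1))ᵀ * fromCols (X 0) (X 1)))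
    (β : (j : Fin (K + 3)) → Fin (q j) → ℝ)
    (θ : (j : Fin (K + 3)) → Fin (s j) → ℝ)
    (W : (j : Fin (K + 3)) → Ω → Fin n → Fin (s j) → ℝ)
    (ε : Fin (K + 3) → Ω → Fin n → ℝ)
    (σ : Fin (K + 3) → Fin (K + 3) → ℝ)
    (hWL2 : ∀ j i l, MemLp (fun ω => W j ω i l) 2 P)
    (hWmean : ∀ j i l, ∫ ω, W j ω i l ∂P = 0)
    (hWindep : iIndepFun W P)
    (hWε : IndepFun (fun ω => fun j => W j ω) (fun ω => fun j => ε j ω) P)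
    (hεL2 : ∀ j i, MemLp (fun ω => ε j ω i) 2 P)
    (hεmean : ∀ j i, ∫ ω, ε j ω i ∂P = 0)
    (hcov : ∀ i j a b, ∫ ω, ε i ω a * ε j ω b ∂P =
      (σ i j • (1 : Matrix (Fin n) (Fin n) ℝ)) a b)
    (hσ : ∀ j : Fin (K + 3), 2 ≤ (j : ℕ) → 0 ≤ σ 0 j ∧ 0 ≤ σ 1 j) :
    let y : (j : Fin (K + 3)) → Ω → Fin n → ℝ :=
      fun j ω => (X j).mulVec (β j) + (Matrix.of (W j ω)).mulVec (θ j) + ε j ω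
    let yhat : (j : Fin (K + 3)) → Ω → Fin n → ℝ :=
      fun j ω => (hatMat (X j)).mulVec (y j ω)
    let H := hatMat (fromCols (X 0) (X 1))
    let yhat12 : Ω → Fin n → ℝ := fun ω => H.mulVec (y 0 ω + y 1 ω)
    (∫ ω, ((∑ j, y j ω) -
        (yhat12 ω + ∑ j ∈ Finset.univ.filter (fun j : Fin (K + 3) => 2 ≤ (j : ℕ)), yhat j ω)) ⬝ᵥ
        ((∑ j, y j ω) -
        (yhat12 ω + ∑ j ∈ Finset.univ.filter (fun j : Fin (K + 3) => 2 ≤ (j : ℕ)), yhat j ω)) ∂P)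
      ≤ ∫ ω, ((∑ j, y j ω) - ∑ j, yhat j ω) ⬝ᵥ ((∑ j, y j ω) - ∑ j, yhat j ω) ∂P := by
  intro y yhat H yhat12
  classical
  set J : Finset (Fin (K + 3)) :=
    Finset.univ.filter (fun j : Fin (K + 3) => 2 ≤ (j : ℕ)) with hJdef
  set V : (j : Fin (K + 3)) → Ω → Fin n → ℝ :=
    fun j ω => (Matrix.of (W j ω)).mulVec (θ j) with hV
  set Z : (j : Fin (K + 3)) → Ω → Fin n → ℝ := fun j ω => V j ω + ε j ω with hZ
  set u : (j : Fin (K + 3)) → Ω → Fin n → ℝ :=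
    fun j ω => (1 - hatMat (X j)).mulVec (Z j ω) with hu
  set d : Ω → Fin n → ℝ := fun ω =>
    (H - hatMat (X 0)).mulVec (Z 0 ω) + (H - hatMat (X 1)).mulVec (Z 1 ω) with hd
  have hHdef : H = hatMat (fromCols (X 0) (X 1)) := rfl
  -- matrix facts
  have hHs : Hᵀ = H := by rw [hHdef]; exact hat_transpose _
  have hHi : H * H = H := by rw [hHdef]; exact hat_idem hX
  have hHX : H * X 0 = X 0 ∧ H * X 1 = X 1 := by
    have h := hat_mul_left hX
    rw [← hHdef, Matrix.mul_fromCols, Matrix.fromCols_ext_iff] at h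
    exact h
  have hHXc : ∀ c : Fin (K + 3), c = 0 ∨ c = 1 → H * X c = X c := by
    rintro c (rfl | rfl)
    · exact hHX.1
    · exact hHX.2
  have hHHc : ∀ c : Fin (K + 3), c = 0 ∨ c = 1 → H * hatMat (X c) = hatMat (X c) := by
    intro c hc
    rw [hatMat, ← Matrix.mul_assoc, ← Matrix.mul_assoc, hHXc c hc]
  have hHcH : ∀ c : Fin (K + 3), c = 0 ∨ c = 1 → hatMat (X c) * H = hatMat (X c) := by
    intro c hc
    have h := congrArg Matrix.transpose (hHHc c hc)
    rwa [Matrix.transpose_mul, hat_transpose, hHs] at h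
  have hPs : ∀ c : Fin (K + 3), (H - hatMat (X c))ᵀ = H - hatMat (X c) := by
    intro c; rw [Matrix.transpose_sub, hHs, hat_transpose]
  have hPi : ∀ c : Fin (K + 3), c = 0 ∨ c = 1 →
      (H - hatMat (X c)) * (H - hatMat (X c)) = H - hatMat (X c) := by
    intro c hc
    rw [Matrix.sub_mul, Matrix.mul_sub, Matrix.mul_sub, hHi, hat_idem (hXj c),
      hHHc c hc, hHcH c hc]
    abel
  have hQs : ∀ j : Fin (K + 3), (1 - hatMat (X j))ᵀ = 1 - hatMat (X j) := by
    intro j; rw [Matrix.transpose_sub, Matrix.transpose_one, hat_transpose]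
  have hQi : ∀ j : Fin (K + 3),
      (1 - hatMat (X j)) * (1 - hatMat (X j)) = 1 - hatMat (X j) := by
    intro j
    rw [Matrix.sub_mul, Matrix.one_mul, Matrix.mul_sub, Matrix.mul_one, hat_idem (hXj j)]
    abel
  have hperp : ∀ c : Fin (K + 3), c = 0 ∨ c = 1 →
      ((1 : Matrix (Fin n) (Fin n) ℝ) - H) * (H - hatMat (X c)) = 0 := by
    intro c hc
    rw [Matrix.sub_mul, Matrix.one_mul, Matrix.mul_sub, hHi, hHHc c hc, sub_self]
  have hannJ : ∀ j : Fin (K + 3), ((1 : Matrix (Fin n) (Fin n) ℝ) - hatMat (X j)) * X j = 0 := by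
    intro j; rw [Matrix.sub_mul, Matrix.one_mul, hat_mul_left (hXj j), sub_self]
  have hannC : ∀ c : Fin (K + 3), c = 0 ∨ c = 1 → (H - hatMat (X c)) * X c = 0 := by
    intro c hc; rw [Matrix.sub_mul, hHXc c hc, hat_mul_left (hXj c), sub_self]
  -- pointwise algebra
  have hkill : ∀ (M : Matrix (Fin n) (Fin n) ℝ) (j : Fin (K + 3)), M * X j = 0 →
      ∀ ω, M.mulVec (y j ω) = M.mulVec (Z j ω) := by
    intro M j hM ω
    show M.mulVec ((X j).mulVec (β j) + (Matrix.of (W j ω)).mulVec (θ j) + ε j ω) = _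
    rw [add_assoc, Matrix.mulVec_add, Matrix.mulVec_mulVec, hM, Matrix.zero_mulVec, zero_add]
  have hres : ∀ (j : Fin (K + 3)) ω, y j ω - yhat j ω = u j ω := by
    intro j ω
    show y j ω - (hatMat (X j)).mulVec (y j ω) = u j ω
    rw [show y j ω - (hatMat (X j)).mulVec (y j ω)
        = ((1 : Matrix (Fin n) (Fin n) ℝ) - hatMat (X j)).mulVec (y j ω) from by
      rw [Matrix.sub_mulVec, Matrix.one_mulVec]]
    rw [hkill _ j (hannJ j) ω]
  have hd12 : ∀ ω, yhat12 ω - (yhat 0 ω + yhat 1 ω) = d ω := by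
    intro ω
    show H.mulVec (y 0 ω + y 1 ω) -
      ((hatMat (X 0)).mulVec (y 0 ω) + (hatMat (X 1)).mulVec (y 1 ω)) = d ω
    have e : H.mulVec (y 0 ω + y 1 ω) -
        ((hatMat (X 0)).mulVec (y 0 ω) + (hatMat (X 1)).mulVec (y 1 ω)) =
        (H - hatMat (X 0)).mulVec (y 0 ω) + (H - hatMat (X 1)).mulVec (y 1 ω) := by
      rw [Matrix.mulVec_add, Matrix.sub_mulVec, Matrix.sub_mulVec]
      abel
    rw [e, hkill _ 0 (hannC 0 (Or.inl rfl)) ω, hkill _ 1 (hannC 1 (Or.inr rfl)) ω]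
  have h1 : ∀ ω, (∑ j, y j ω) - ∑ j, yhat j ω = ∑ j, u j ω := by
    intro ω
    rw [← Finset.sum_sub_distrib]
    exact Finset.sum_congr rfl fun j _ => hres j ω
  have hsum_split : ∀ f : Fin (K + 3) → (Fin n → ℝ),
      ∑ j, f j = f 0 + f 1 + ∑ j ∈ J, f j := by
    intro f
    have h01 : Finset.univ.filter (fun j : Fin (K + 3) => ¬ 2 ≤ (j : ℕ)) =
        ({0, 1} : Finset (Fin (K + 3))) := by
      ext j
      simp only [Finset.mem_filter, Finset.mem_univ, true_and, Finset.mem_insert,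
        Finset.mem_singleton, Fin.ext_iff, Fin.val_zero, Fin.val_one]
      omega
    have h := Finset.sum_filter_add_sum_filter_not Finset.univ
      (fun j : Fin (K + 3) => 2 ≤ (j : ℕ)) f
    rw [h01, Finset.sum_pair (by simp [Fin.ext_iff] : (0 : Fin (K + 3)) ≠ 1)] at h
    rw [← h, hJdef]
    abel
  have h2 : ∀ ω, (∑ j, y j ω) - (yhat12 ω + ∑ j ∈ J, yhat j ω) = (∑ j, u j ω) - d ω := by
    intro ω
    have e1 := h1 ω
    have e2 := hd12 ω
    have e3 := hsum_split (fun j => yhat j ω)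
    linear_combination (e1 + e3) - e2
  -- orthogonality
  have hperpvec : ∀ (v w : Fin n → ℝ) (c : Fin (K + 3)), c = 0 ∨ c = 1 →
      (((1 : Matrix (Fin n) (Fin n) ℝ) - H).mulVec v) ⬝ᵥ ((H - hatMat (X c)).mulVec w) = 0 := by
    intro v w c hc
    rw [Matrix.dotProduct_mulVec]
    have hsym : ((1 : Matrix (Fin n) (Fin n) ℝ) - H)ᵀ = 1 - H := by
      rw [Matrix.transpose_sub, Matrix.transpose_one, hHs]
    have e2 : ((1 : Matrix (Fin n) (Fin n) ℝ) - H).mulVec v = v ᵥ* (1 - H) := by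
      conv_lhs => rw [← hsym]
      exact Matrix.mulVec_transpose _ _
    rw [e2, Matrix.vecMul_vecMul, hperp c hc, Matrix.vecMul_zero, zero_dotProduct]
  have horth : ∀ ω, (u 0 ω + u 1 ω) ⬝ᵥ d ω = d ω ⬝ᵥ d ω := by
    intro ω
    have step1 : u 0 ω + u 1 ω - d ω =
        ((1 : Matrix (Fin n) (Fin n) ℝ) - H).mulVec (Z 0 ω) +
        ((1 : Matrix (Fin n) (Fin n) ℝ) - H).mulVec (Z 1 ω) := by
      have efac : ∀ (c : Fin (K + 3)) (v : Fin n → ℝ),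
          (1 - hatMat (X c)).mulVec v - (H - hatMat (X c)).mulVec v =
          ((1 : Matrix (Fin n) (Fin n) ℝ) - H).mulVec v := by
        intro c v
        rw [← Matrix.sub_mulVec]
        rw [show (1 : Matrix (Fin n) (Fin n) ℝ) - hatMat (X c) - (H - hatMat (X c)) = 1 - H
          from by abel]
      rw [hu, hd]
      calc (1 - hatMat (X 0)).mulVec (Z 0 ω) + (1 - hatMat (X 1)).mulVec (Z 1 ω) -
            ((H - hatMat (X 0)).mulVec (Z 0 ω) + (H - hatMat (X 1)).mulVec (Z 1 ω))
          = ((1 - hatMat (X 0)).mulVec (Z 0 ω) - (H - hatMat (X 0)).mulVec (Z 0 ω)) +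
            ((1 - hatMat (X 1)).mulVec (Z 1 ω) - (H - hatMat (X 1)).mulVec (Z 1 ω)) := by abel
        _ = _ := by rw [efac 0 (Z 0 ω), efac 1 (Z 1 ω)]
    have step2 : (u 0 ω + u 1 ω - d ω) ⬝ᵥ d ω = 0 := by
      rw [step1, hd, add_dotProduct, dotProduct_add, dotProduct_add,
        hperpvec _ _ 0 (Or.inl rfl), hperpvec _ _ 1 (Or.inr rfl),
        hperpvec _ _ 0 (Or.inl rfl), hperpvec _ _ 1 (Or.inr rfl)]
      norm_num
    rw [sub_dotProduct] at step2
    linarith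
  have hdecomp : ∀ ω, (∑ j, u j ω) ⬝ᵥ (∑ j, u j ω) =
      ((∑ j, u j ω) - d ω) ⬝ᵥ ((∑ j, u j ω) - d ω) +
      (2 * ((∑ j ∈ J, u j ω) ⬝ᵥ d ω) + d ω ⬝ᵥ d ω) := by
    intro ω
    have f1 : ((∑ j, u j ω) - d ω) ⬝ᵥ ((∑ j, u j ω) - d ω) =
        (∑ j, u j ω) ⬝ᵥ (∑ j, u j ω) - (∑ j, u j ω) ⬝ᵥ d ω -
        (d ω ⬝ᵥ (∑ j, u j ω) - d ω ⬝ᵥ d ω) := by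
      rw [sub_dotProduct, dotProduct_sub, dotProduct_sub]
    have f2 : d ω ⬝ᵥ (∑ j, u j ω) = (∑ j, u j ω) ⬝ᵥ d ω := dotProduct_comm _ _
    have f3 : (∑ j, u j ω) ⬝ᵥ d ω =
        (u 0 ω + u 1 ω) ⬝ᵥ d ω + (∑ j ∈ J, u j ω) ⬝ᵥ d ω := by
      rw [hsum_split (fun j => u j ω)]
      rw [add_dotProduct]
    have f4 := horth ω
    linarith
  -- MemLp facts
  have hVcoord : ∀ (j : Fin (K + 3)) ω a, V j ω a = ∑ l, W j ω a l * θ j l := by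
    intro j ω a
    rw [hV]
    simp [Matrix.mulVec, dotProduct]
  have hVL2 : ∀ (j : Fin (K + 3)) a, MemLp (fun ω => V j ω a) 2 P := by
    intro j a
    have e : (fun ω => V j ω a) = fun ω => ∑ l, θ j l * W j ω a l := by
      funext ω
      rw [hVcoord j ω a]
      exact Finset.sum_congr rfl fun l _ => mul_comm _ _
    rw [e]
    exact memLp_finset_sum _ fun l _ => (hWL2 j a l).const_mul _
  have hZL2 : ∀ (j : Fin (K + 3)) a, MemLp (fun ω => Z j ω a) 2 P := by
    intro j a
    have e : (fun ω => Z j ω a) = fun ω => V j ω a + ε j ω a := by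
      funext ω; rw [hZ]; rfl
    rw [e]
    exact (hVL2 j a).add (hεL2 j a)
  have hmulL2 : ∀ (A : Matrix (Fin n) (Fin n) ℝ) (v : Ω → Fin n → ℝ),
      (∀ a, MemLp (fun ω => v ω a) 2 P) → ∀ i, MemLp (fun ω => A.mulVec (v ω) i) 2 P := by
    intro A v hv i
    have e : (fun ω => A.mulVec (v ω) i) = fun ω => ∑ a, A i a * v ω a := by
      funext ω; simp [Matrix.mulVec, dotProduct]
    rw [e]
    exact memLp_finset_sum _ fun a _ => (hv a).const_mul _
  have hUL2 : ∀ (j : Fin (K + 3)) i, MemLp (fun ω => u j ω i) 2 P := by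
    intro j i
    have e : (fun ω => u j ω i) = fun ω => (1 - hatMat (X j)).mulVec (Z j ω) i := by
      funext ω; rw [hu]
    rw [e]
    exact hmulL2 _ (fun ω => Z j ω) (hZL2 j) i
  have hdL2 : ∀ i, MemLp (fun ω => d ω i) 2 P := by
    intro i
    have e : (fun ω => d ω i) = fun ω =>
        (H - hatMat (X 0)).mulVec (Z 0 ω) i + (H - hatMat (X 1)).mulVec (Z 1 ω) i := by
      funext ω; rw [hd]; rfl
    rw [e]
    exact (hmulL2 _ (fun ω => Z 0 ω) (hZL2 0) i).add (hmulL2 _ (fun ω => Z 1 ω) (hZL2 1) i)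
  have hSL2 : ∀ i, MemLp (fun ω => (∑ j, u j ω) i) 2 P := by
    intro i
    have e : (fun ω => (∑ j, u j ω) i) = fun ω => ∑ j, u j ω i := by
      funext ω; rw [Finset.sum_apply]
    rw [e]
    exact memLp_finset_sum _ fun j _ => hUL2 j i
  have hSJL2 : ∀ i, MemLp (fun ω => (∑ j ∈ J, u j ω) i) 2 P := by
    intro i
    have e : (fun ω => (∑ j ∈ J, u j ω) i) = fun ω => ∑ j ∈ J, u j ω i := by
      funext ω; rw [Finset.sum_apply]
    rw [e]
    exact memLp_finset_sum _ fun j _ => hUL2 j i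
  have hGL2 : ∀ i, MemLp (fun ω => ((∑ j, u j ω) - d ω) i) 2 P := by
    intro i
    have e : (fun ω => ((∑ j, u j ω) - d ω) i) = fun ω => (∑ j, u j ω) i - d ω i := by
      funext ω; rfl
    rw [e]
    exact (hSL2 i).sub (hdL2 i)
  have hdotInt : ∀ (f g : Ω → Fin n → ℝ), (∀ i, MemLp (fun ω => f ω i) 2 P) →
      (∀ i, MemLp (fun ω => g ω i) 2 P) → Integrable (fun ω => f ω ⬝ᵥ g ω) P := by
    intro f g hf hg
    have e : (fun ω => f ω ⬝ᵥ g ω) = fun ω => ∑ i, f ω i * g ω i := rfl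
    rw [e]
    exact integrable_finset_sum _ fun i _ => integrable_mul_of_memL2 (hf i) (hg i)
  -- scalar mean-zero facts
  have hWW : ∀ (j c : Fin (K + 3)), j ≠ c → ∀ a l b m,
      ∫ ω, W j ω a l * W c ω b m ∂P = 0 := by
    intro j c hjc a l b m
    have h1 : IndepFun (fun ω => W j ω a l) (fun ω => W c ω b m) P := by
      have h2 := (hWindep.indepFun hjc).comp
        (show Measurable fun M : Fin n → Fin (s j) → ℝ => M a l from
          (measurable_pi_apply l).comp (measurable_pi_apply a))
        (show Measurable fun M : Fin n → Fin (s c) → ℝ => M b m from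
          (measurable_pi_apply m).comp (measurable_pi_apply b))
      exact h2
    have h3 := h1.integral_mul_eq_mul_integral (hWL2 j a l).aestronglyMeasurable
      (hWL2 c b m).aestronglyMeasurable
    have h4 : (fun ω => W j ω a l) * (fun ω => W c ω b m) =
        fun ω => W j ω a l * W c ω b m := rfl
    rw [h4] at h3
    rw [h3, hWmean, zero_mul]
  have hWE : ∀ (j c : Fin (K + 3)) a l b, ∫ ω, W j ω a l * ε c ω b ∂P = 0 := by
    intro j c a l b
    have h1 : IndepFun (fun ω => W j ω a l) (fun ω => ε c ω b) P := by
      have m1 : Measurable fun F : (j' : Fin (K + 3)) → Ω → Fin n → Fin (s j') → ℝ => F j :=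
        measurable_pi_apply j
      have mW1 : Measurable fun F : (j' : Fin (K + 3)) → Fin n → Fin (s j') → ℝ => F j :=
        measurable_pi_apply j
      have mW2 : Measurable fun M : Fin n → Fin (s j) → ℝ => M a l :=
        (measurable_pi_apply l).comp (measurable_pi_apply a)
      have mE1 : Measurable fun G : Fin (K + 3) → Fin n → ℝ => G c :=
        measurable_pi_apply c
      have mE2 : Measurable fun v : Fin n → ℝ => v b := measurable_pi_apply b
      have h2 := hWε.comp (mW2.comp mW1) (mE2.comp mE1)
      exact h2
    have h3 := h1.integral_mul_eq_mul_integral (hWL2 j a l).aestronglyMeasurable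
      (hεL2 c b).aestronglyMeasurable
    have h4 : (fun ω => W j ω a l) * (fun ω => ε c ω b) =
        fun ω => W j ω a l * ε c ω b := rfl
    rw [h4] at h3
    rw [h3, hWmean, zero_mul]
  have hWV : ∀ (j c : Fin (K + 3)), j ≠ c → ∀ a l b,
      ∫ ω, W j ω a l * V c ω b ∂P = 0 := by
    intro j c hjc a l b
    have e : (fun ω => W j ω a l * V c ω b) =
        fun ω => ∑ m, θ c m * (W j ω a l * W c ω b m) := by
      funext ω
      rw [hVcoord c ω b, Finset.mul_sum]
      exact Finset.sum_congr rfl fun m _ => by ring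
    rw [e, integral_finset_sum _ (fun m _ =>
      (integrable_mul_of_memL2 (hWL2 j a l) (hWL2 c b m)).const_mul _)]
    refine Finset.sum_eq_zero fun m _ => ?_
    rw [integral_const_mul, hWW j c hjc a l b m, mul_zero]
  have hVV : ∀ (j c : Fin (K + 3)), j ≠ c → ∀ a b,
      ∫ ω, V j ω a * V c ω b ∂P = 0 := by
    intro j c hjc a b
    have e : (fun ω => V j ω a * V c ω b) =
        fun ω => ∑ l, θ j l * (W j ω a l * V c ω b) := by
      funext ω
      rw [hVcoord j ω a, Finset.sum_mul]
      exact Finset.sum_congr rfl fun l _ => by ring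
    rw [e, integral_finset_sum _ (fun l _ =>
      (integrable_mul_of_memL2 (hWL2 j a l) (hVL2 c b)).const_mul _)]
    refine Finset.sum_eq_zero fun l _ => ?_
    rw [integral_const_mul, hWV j c hjc a l b, mul_zero]
  have hVE : ∀ (j c : Fin (K + 3)) a b, ∫ ω, V j ω a * ε c ω b ∂P = 0 := by
    intro j c a b
    have e : (fun ω => V j ω a * ε c ω b) =
        fun ω => ∑ l, θ j l * (W j ω a l * ε c ω b) := by
      funext ω
      rw [hVcoord j ω a, Finset.sum_mul]
      exact Finset.sum_congr rfl fun l _ => by ring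
    rw [e, integral_finset_sum _ (fun l _ =>
      (integrable_mul_of_memL2 (hWL2 j a l) (hεL2 c b)).const_mul _)]
    refine Finset.sum_eq_zero fun l _ => ?_
    rw [integral_const_mul, hWE j c a l b, mul_zero]
  have hEV : ∀ (j c : Fin (K + 3)) a b, ∫ ω, ε j ω a * V c ω b ∂P = 0 := by
    intro j c a b
    have e : (fun ω => ε j ω a * V c ω b) = fun ω => V c ω b * ε j ω a := by
      funext ω; ring
    rw [e, hVE c j b a]
  have hZZ : ∀ (j c : Fin (K + 3)), j ≠ c → ∀ a b,
      ∫ ω, Z j ω a * Z c ω b ∂P = if a = b then σ c j else 0 := by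
    intro j c hjc a b
    have hi1 : Integrable (fun ω => V j ω a * V c ω b) P :=
      integrable_mul_of_memL2 (hVL2 j a) (hVL2 c b)
    have hi2 : Integrable (fun ω => V j ω a * ε c ω b) P :=
      integrable_mul_of_memL2 (hVL2 j a) (hεL2 c b)
    have hi3 : Integrable (fun ω => ε j ω a * V c ω b) P :=
      integrable_mul_of_memL2 (hεL2 j a) (hVL2 c b)
    have hi4 : Integrable (fun ω => ε c ω b * ε j ω a) P :=
      integrable_mul_of_memL2 (hεL2 c b) (hεL2 j a)
    have e : (fun ω => Z j ω a * Z c ω b) = fun ω =>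
        (V j ω a * V c ω b + V j ω a * ε c ω b) +
        (ε j ω a * V c ω b + ε c ω b * ε j ω a) := by
      funext ω
      rw [hZ]
      simp only [Pi.add_apply]
      ring
    have hi12 : Integrable (fun ω => V j ω a * V c ω b + V j ω a * ε c ω b) P := hi1.add hi2
    have hi34 : Integrable (fun ω => ε j ω a * V c ω b + ε c ω b * ε j ω a) P := hi3.add hi4
    rw [e, integral_add hi12 hi34, integral_add hi1 hi2,
      integral_add hi3 hi4, hVV j c hjc a b, hVE j c a b, hEV j c a b, hcov c j b a]
    by_cases hab : a = b
    · simp [hab, Matrix.smul_apply, Matrix.one_apply, smul_eq_mul]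
    · simp [hab, Ne.symm hab, Matrix.smul_apply, Matrix.one_apply, smul_eq_mul]
  have hZint : ∀ (j c : Fin (K + 3)) a b, Integrable (fun ω => Z j ω a * Z c ω b) P :=
    fun j c a b => integrable_mul_of_memL2 (hZL2 j a) (hZL2 c b)
  -- key expectation
  have key : ∀ (A B : Matrix (Fin n) (Fin n) ℝ) (j c : Fin (K + 3)), j ≠ c →
      ∫ ω, (A.mulVec (Z j ω)) ⬝ᵥ (B.mulVec (Z c ω)) ∂P =
      σ c j * ∑ i, ∑ a, A i a * B i a := by
    intro A B j c hjc
    have hpt : (fun ω => (A.mulVec (Z j ω)) ⬝ᵥ (B.mulVec (Z c ω))) = fun ω =>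
        ∑ i, ∑ a, ∑ b, (A i a * B i b) * (Z j ω a * Z c ω b) := by
      funext ω
      simp only [dotProduct, Matrix.mulVec]
      refine Finset.sum_congr rfl fun i _ => ?_
      rw [Finset.sum_mul_sum]
      exact Finset.sum_congr rfl fun a _ => Finset.sum_congr rfl fun b _ => by ring
    have hterm : ∀ (i a b : Fin n),
        Integrable (fun ω => (A i a * B i b) * (Z j ω a * Z c ω b)) P :=
      fun i a b => (hZint j c a b).const_mul _
    rw [hpt, integral_finset_sum _ (fun i _ => integrable_finset_sum _
      (fun a _ => integrable_finset_sum _ (fun b _ => hterm i a b)))]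
    rw [Finset.mul_sum]
    refine Finset.sum_congr rfl fun i _ => ?_
    rw [integral_finset_sum _ (fun a _ => integrable_finset_sum _ (fun b _ => hterm i a b))]
    rw [Finset.mul_sum]
    refine Finset.sum_congr rfl fun a _ => ?_
    rw [integral_finset_sum _ (fun b _ => hterm i a b)]
    have e : ∀ b : Fin n, ∫ ω, (A i a * B i b) * (Z j ω a * Z c ω b) ∂P =
        (A i a * B i b) * if a = b then σ c j else 0 := by
      intro b
      rw [integral_const_mul, hZZ j c hjc a b]
    simp only [e, mul_ite, mul_zero]
    rw [Finset.sum_ite_eq Finset.univ a (fun b => A i a * B i b * σ c j)]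
    simp [mul_comm, mul_assoc]
  -- integrability of the pieces
  have hIG : Integrable
      (fun ω => ((∑ j, u j ω) - d ω) ⬝ᵥ ((∑ j, u j ω) - d ω)) P :=
    hdotInt _ _ hGL2 hGL2
  have hIJd : Integrable (fun ω => (∑ j ∈ J, u j ω) ⬝ᵥ d ω) P :=
    hdotInt _ _ hSJL2 hdL2
  have hIdd : Integrable (fun ω => d ω ⬝ᵥ d ω) P := hdotInt _ _ hdL2 hdL2
  -- the integral decomposition
  have hInt : ∫ ω, (∑ j, u j ω) ⬝ᵥ (∑ j, u j ω) ∂P =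
      (∫ ω, ((∑ j, u j ω) - d ω) ⬝ᵥ ((∑ j, u j ω) - d ω) ∂P) +
      (2 * (∫ ω, (∑ j ∈ J, u j ω) ⬝ᵥ d ω ∂P) + ∫ ω, d ω ⬝ᵥ d ω ∂P) := by
    have e : ∫ ω, (∑ j, u j ω) ⬝ᵥ (∑ j, u j ω) ∂P =
        ∫ ω, (((∑ j, u j ω) - d ω) ⬝ᵥ ((∑ j, u j ω) - d ω) +
          (2 * ((∑ j ∈ J, u j ω) ⬝ᵥ d ω) + d ω ⬝ᵥ d ω)) ∂P :=
      integral_congr_ae (Filter.Eventually.of_forall fun ω => hdecomp ω)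
    have hI2 : Integrable (fun ω => 2 * ((∑ j ∈ J, u j ω) ⬝ᵥ d ω)) P := hIJd.const_mul 2
    have hI3 : Integrable (fun ω => 2 * ((∑ j ∈ J, u j ω) ⬝ᵥ d ω) + d ω ⬝ᵥ d ω) P :=
      hI2.add hIdd
    rw [e, integral_add hIG hI3, integral_add hI2 hIdd, integral_const_mul]
  -- nonnegativity of the cross term
  have hJd0 : 0 ≤ ∫ ω, (∑ j ∈ J, u j ω) ⬝ᵥ d ω ∂P := by
    have hre : (fun ω => (∑ j ∈ J, u j ω) ⬝ᵥ d ω) = fun ω => ∑ j ∈ J, u j ω ⬝ᵥ d ω := by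
      funext ω; exact sum_dotProduct' _ _ _
    rw [hre, integral_finset_sum _ (fun j _ => hdotInt _ _ (fun i => hUL2 j i) hdL2)]
    refine Finset.sum_nonneg fun j hj => ?_
    have hj2 : 2 ≤ (j : ℕ) := by
      rw [hJdef] at hj
      simpa using hj
    have hj0 : j ≠ 0 := by
      intro h; rw [h] at hj2; simp at hj2
    have hj1 : j ≠ 1 := by
      intro h; rw [h] at hj2; simp at hj2
    have hsplit : (fun ω => u j ω ⬝ᵥ d ω) = fun ω =>
        ((1 - hatMat (X j)).mulVec (Z j ω)) ⬝ᵥ ((H - hatMat (X 0)).mulVec (Z 0 ω)) +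
        ((1 - hatMat (X j)).mulVec (Z j ω)) ⬝ᵥ ((H - hatMat (X 1)).mulVec (Z 1 ω)) := by
      funext ω
      rw [hu, hd]
      exact dotProduct_add _ _ _
    have hi1 : Integrable (fun ω =>
        ((1 - hatMat (X j)).mulVec (Z j ω)) ⬝ᵥ ((H - hatMat (X 0)).mulVec (Z 0 ω))) P :=
      hdotInt _ _ (hmulL2 _ (fun ω => Z j ω) (hZL2 j)) (hmulL2 _ (fun ω => Z 0 ω) (hZL2 0))
    have hi2 : Integrable (fun ω =>
        ((1 - hatMat (X j)).mulVec (Z j ω)) ⬝ᵥ ((H - hatMat (X 1)).mulVec (Z 1 ω))) P :=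
      hdotInt _ _ (hmulL2 _ (fun ω => Z j ω) (hZL2 j)) (hmulL2 _ (fun ω => Z 1 ω) (hZL2 1))
    rw [hsplit, integral_add hi1 hi2, key _ _ j 0 hj0, key _ _ j 1 hj1]
    have ht0 : 0 ≤ ∑ i, ∑ a, (1 - hatMat (X j)) i a * (H - hatMat (X 0)) i a := by
      rw [sum_mul_eq_trace (hPs 0)]
      exact trace_mul_nonneg_of_proj (hQs j) (hQi j) (hPs 0) (hPi 0 (Or.inl rfl))
    have ht1 : 0 ≤ ∑ i, ∑ a, (1 - hatMat (X j)) i a * (H - hatMat (X 1)) i a := by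
      rw [sum_mul_eq_trace (hPs 1)]
      exact trace_mul_nonneg_of_proj (hQs j) (hQi j) (hPs 1) (hPi 1 (Or.inr rfl))
    exact add_nonneg (mul_nonneg (hσ j hj2).1 ht0) (mul_nonneg (hσ j hj2).2 ht1)
  have hdd0 : 0 ≤ ∫ ω, d ω ⬝ᵥ d ω ∂P :=
    integral_nonneg fun ω => Finset.sum_nonneg fun i _ => mul_self_nonneg _
  -- conclude
  simp_rw [h2, h1]
  rw [hInt]
  exact le_add_of_nonneg_right (add_nonneg (mul_nonneg (by norm_num) hJd0) hdd0)
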